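/- Let f: R^{n×p} → R be twice continuously differentiable with ‖∇²f(X)‖ ≤ ρ on an open convex set containing the Stiefel manifold, and let γ > ρ. For X̄ with orthonormal columns and X⁺ = X̄ Q obtained from the proximal correction step (Q = -U V^T from an SVD of Z = X̄^T ∇f(X̄) - γ I_p, or X⁺ = X̄ if Z = 0), one has f(X̄) - f(X⁺) ≥ (1/(8 c_γ)) ‖X̄^T ∇f(X̄) - ∇f(X̄)^T X̄‖_F^2, where c_γ = M + γ and M bounds ‖∇f‖_2 on the Stiefel manifold. -/

import Mathlib

open Matrix BigOperators

attribute [local instance]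
  Matrix.frobeniusNormedAddCommGroup Matrix.frobeniusNormedSpace

noncomputable def frobSq {m n : Type*} [Fintype m] [Fintype n] (A : Matrix m n ℝ) : ℝ :=
  ∑ i, ∑ j, (A i j) ^ 2

/-- The gradient of `f` with respect to the Frobenius inner product,
expressed entrywise via the Fréchet derivative. -/
noncomputable def grad {n p : ℕ} (f : Matrix (Fin n) (Fin p) ℝ → ℝ)
    (X : Matrix (Fin n) (Fin p) ℝ) : Matrix (Fin n) (Fin p) ℝ :=
  Matrix.of fun i j => fderiv ℝ f X (Matrix.single i j 1)

noncomputable def en {k : ℕ} (v : Fin k → ℝ) : ℝ := Real.sqrt (∑ i, v i ^ 2)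

lemma en_nonneg {k : ℕ} (v : Fin k → ℝ) : 0 ≤ en v := Real.sqrt_nonneg _

lemma en_sq {k : ℕ} (v : Fin k → ℝ) : en v ^ 2 = ∑ i, v i ^ 2 :=
  Real.sq_sqrt (by positivity)

lemma en_cs {k : ℕ} (v w : Fin k → ℝ) : ∑ i, v i * w i ≤ en v * en w := by
  have h := Finset.sum_mul_sq_le_sq_mul_sq Finset.univ v w
  have h1 : (0:ℝ) ≤ en v * en w := mul_nonneg (en_nonneg v) (en_nonneg w)
  nlinarith [en_sq v, en_sq w, sq_nonneg (∑ i, v i * w i + en v * en w)]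

lemma en_triangle {k : ℕ} (v w : Fin k → ℝ) : en (fun i => v i + w i) ≤ en v + en w := by
  have h1 : ∑ i, (v i + w i) ^ 2 = ∑ i, v i ^ 2 + ∑ i, w i ^ 2 + 2 * ∑ i, v i * w i := by
    rw [Finset.mul_sum, ← Finset.sum_add_distrib, ← Finset.sum_add_distrib]
    exact Finset.sum_congr rfl fun i _ => by ring
  have h2 : ∑ i, (v i + w i) ^ 2 ≤ (en v + en w) ^ 2 := by
    nlinarith [en_cs v w, en_sq v, en_sq w]
  calc en (fun i => v i + w i) = Real.sqrt (∑ i, (v i + w i) ^ 2) := rfl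
    _ ≤ Real.sqrt ((en v + en w) ^ 2) := Real.sqrt_le_sqrt h2
    _ = en v + en w := Real.sqrt_sq (add_nonneg (en_nonneg v) (en_nonneg w))

lemma en_smul {k : ℕ} (c : ℝ) (v : Fin k → ℝ) : en (fun i => c * v i) = |c| * en v := by
  unfold en
  rw [show ∑ i, (c * v i) ^ 2 = c ^ 2 * ∑ i, v i ^ 2 by rw [Finset.mul_sum]; exact Finset.sum_congr rfl fun i _ => by ring]
  rw [Real.sqrt_mul (sq_nonneg c), Real.sqrt_sq_eq_abs]

lemma en_transpose_mulVec_le {n p : ℕ} (X : Matrix (Fin n) (Fin p) ℝ) (hX : Xᵀ * X = 1)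
    (w : Fin n → ℝ) : en (Xᵀ *ᵥ w) ≤ en w := by
  set u := Xᵀ *ᵥ w with hu
  have key : (X *ᵥ u) ᵥ* X = u := by
    rw [← Matrix.mulVec_transpose, Matrix.mulVec_mulVec, hX, Matrix.one_mulVec]
  have h1 : en (X *ᵥ u) = en u := by
    unfold en; congr 1
    calc ∑ i, (X *ᵥ u) i ^ 2 = (X *ᵥ u) ⬝ᵥ (X *ᵥ u) := by
          simp [dotProduct, sq]
      _ = u ⬝ᵥ u := by rw [Matrix.dotProduct_mulVec, key]
      _ = ∑ i, u i ^ 2 := by simp [dotProduct, sq]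
  have h2 : ∑ j, u j ^ 2 = ∑ i, (X *ᵥ u) i * w i := by
    calc ∑ j, u j ^ 2 = u ⬝ᵥ u := by simp [dotProduct, sq]
      _ = u ⬝ᵥ (Xᵀ *ᵥ w) := by rw [← hu]
      _ = (u ᵥ* Xᵀ) ⬝ᵥ w := Matrix.dotProduct_mulVec _ _ _
      _ = (X *ᵥ u) ⬝ᵥ w := by rw [Matrix.vecMul_transpose]
      _ = ∑ i, (X *ᵥ u) i * w i := rfl
  have h3 : en u ^ 2 ≤ en u * en w := by
    rw [en_sq, h2]
    calc ∑ i, (X *ᵥ u) i * w i ≤ en (X *ᵥ u) * en w := en_cs _ _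
      _ = en u * en w := by rw [h1]
  rcases eq_or_lt_of_le (en_nonneg u) with h | h
  · rw [← h]; exact en_nonneg w
  · nlinarith

theorem descent_lemma {E : Type*} [NormedAddCommGroup E] [NormedSpace ℝ E]
    {f : E → ℝ} {f' : E → E →L[ℝ] ℝ} {s : Set E} (hs : Convex ℝ s)
    {ρ : ℝ} (hρ0 : 0 ≤ ρ)
    (hd : ∀ z ∈ s, HasFDerivAt f (f' z) z)
    (hlip : ∀ z ∈ s, ∀ w ∈ s, ‖f' w - f' z‖ ≤ ρ * ‖w - z‖)
    {x y : E} (hx : x ∈ s) (hy : y ∈ s) :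
    f y ≤ f x + f' x (y - x) + ρ / 2 * ‖y - x‖ ^ 2 := by
  set d := y - x with hdef
  have hmem : ∀ t ∈ Set.Icc (0:ℝ) 1, x + t • d ∈ s := by
    intro t ht
    have h := hs hx hy (sub_nonneg.2 ht.2) ht.1 (by ring)
    have e : x + t • d = (1 - t) • x + t • y := by
      rw [hdef, smul_sub, sub_smul, one_smul]; abel
    rw [e]; exact h
  set c₁ := f' x d with hc₁
  set c₂ := ρ / 2 * ‖d‖ ^ 2 with hc₂
  set g : ℝ → ℝ := fun t => f (x + t • d) - (c₁ * t + c₂ * t ^ 2) with hg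
  have hder : ∀ t ∈ Set.Icc (0:ℝ) 1,
      HasDerivAt g (f' (x + t • d) d - (c₁ + c₂ * (2 * t))) t := by
    intro t ht
    have h1 : HasDerivAt (fun t : ℝ => x + t • d) d t := by
      simpa using ((hasDerivAt_id t).smul_const d).const_add x
    have h2 := (hd _ (hmem t ht)).comp_hasDerivAt t h1
    have h3 : HasDerivAt (fun t : ℝ => c₁ * t + c₂ * t ^ 2) (c₁ + c₂ * (2 * t)) t := by
      have h4 := ((hasDerivAt_id t).const_mul c₁).add ((hasDerivAt_pow 2 t).const_mul c₂)
      simpa [pow_one, Pi.add_def] using h4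
    exact h2.sub h3
  have hanti : AntitoneOn g (Set.Icc 0 1) := by
    apply antitoneOn_of_deriv_nonpos (convex_Icc 0 1)
    · intro t ht; exact (hder t ht).continuousAt.continuousWithinAt
    · rw [interior_Icc]; intro t ht
      exact (hder t (Set.mem_Icc_of_Ioo ht)).differentiableAt.differentiableWithinAt
    · rw [interior_Icc]; intro t ht
      rw [(hder t (Set.mem_Icc_of_Ioo ht)).deriv]
      have htmem := hmem t (Set.mem_Icc_of_Ioo ht)
      have h4 : ‖f' (x + t • d) - f' x‖ ≤ ρ * ‖(x + t • d) - x‖ := hlip x hx _ htmem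
      have h5 : ‖(x + t • d) - x‖ = t * ‖d‖ := by
        rw [add_sub_cancel_left, norm_smul, Real.norm_eq_abs, abs_of_pos ht.1]
      have hb : f' (x + t • d) d - f' x d ≤ ρ * t * ‖d‖ ^ 2 := by
        calc f' (x + t • d) d - f' x d = (f' (x + t • d) - f' x) d := by simp
          _ ≤ ‖(f' (x + t • d) - f' x) d‖ := le_abs_self _
          _ ≤ ‖f' (x + t • d) - f' x‖ * ‖d‖ := ContinuousLinearMap.le_opNorm _ _
          _ ≤ (ρ * (t * ‖d‖)) * ‖d‖ := by
              apply mul_le_mul_of_nonneg_right _ (norm_nonneg d)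
              rw [← h5]; exact h4
          _ = ρ * t * ‖d‖ ^ 2 := by ring
      have he : c₂ * (2 * t) = ρ * t * ‖d‖ ^ 2 := by rw [hc₂]; ring
      linarith [hb, he, hc₁]
  have h01 : g 1 ≤ g 0 :=
    hanti (Set.mem_Icc.2 ⟨le_refl 0, zero_le_one⟩) (Set.mem_Icc.2 ⟨zero_le_one, le_refl 1⟩)
      zero_le_one
  have e0 : g 0 = f x := by simp [hg]
  have e1 : g 1 = f y - (c₁ + c₂) := by
    have hxy : x + d = y := by rw [hdef]; abel
    simp [hg, hxy]
  rw [e0, e1] at h01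
  have : f y ≤ f x + c₁ + c₂ := by linarith
  simpa [hc₁, hc₂, hdef] using this

lemma sq_sub_le_two (a b : ℝ) : (a - b) ^ 2 ≤ 2 * a ^ 2 + 2 * b ^ 2 := by
  nlinarith [sq_nonneg (a + b)]

lemma frobSq_nonneg {m k : Type*} [Fintype m] [Fintype k] (A : Matrix m k ℝ) : 0 ≤ frobSq A :=
  Finset.sum_nonneg fun _ _ => Finset.sum_nonneg fun _ _ => sq_nonneg _

lemma frobSq_eq_trace {m k : Type*} [Fintype m] [Fintype k] (A : Matrix m k ℝ) :
    frobSq A = Matrix.trace (Aᵀ * A) := by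
  unfold frobSq
  simp only [Matrix.trace, Matrix.diag_apply, Matrix.mul_apply, Matrix.transpose_apply]
  rw [Finset.sum_comm]
  exact Finset.sum_congr rfl fun i _ => Finset.sum_congr rfl fun j _ => by ring

lemma frobSq_transpose {m k : Type*} [Fintype m] [Fintype k] (A : Matrix m k ℝ) :
    frobSq Aᵀ = frobSq A := by
  unfold frobSq
  simp only [Matrix.transpose_apply]
  exact Finset.sum_comm

lemma norm_sq_eq_frobSq {n p : ℕ} (A : Matrix (Fin n) (Fin p) ℝ) : ‖A‖ ^ 2 = frobSq A := by
  rw [Matrix.frobenius_norm_def]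
  have h : ∑ i, ∑ j, ‖A i j‖ ^ (2:ℝ) = frobSq A := by
    unfold frobSq
    refine Finset.sum_congr rfl fun i _ => Finset.sum_congr rfl fun j _ => ?_
    rw [show (2:ℝ) = ((2:ℕ):ℝ) by norm_num, Real.rpow_natCast, Real.norm_eq_abs, sq_abs]
  rw [h, ← Real.sqrt_eq_rpow]
  exact Real.sq_sqrt (frobSq_nonneg A)

lemma clm_apply_matrix {n p : ℕ} (L : Matrix (Fin n) (Fin p) ℝ →L[ℝ] ℝ)
    (H : Matrix (Fin n) (Fin p) ℝ) :
    L H = ∑ i, ∑ j, H i j * L (Matrix.single i j 1) := by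
  conv_lhs => rw [Matrix.matrix_eq_sum_single H]
  rw [map_sum]
  refine Finset.sum_congr rfl fun i _ => ?_
  rw [map_sum]
  refine Finset.sum_congr rfl fun j _ => ?_
  rw [show Matrix.single i j (H i j) = (H i j) • Matrix.single i j (1:ℝ) by
    rw [Matrix.smul_single, smul_eq_mul, mul_one]]
  rw [_root_.map_smul, smul_eq_mul]
theorem stmt_14 (n p : ℕ) (f : Matrix (Fin n) (Fin p) ℝ → ℝ) (ρ γ M : ℝ)
    (Ω : Set (Matrix (Fin n) (Fin p) ℝ)) (hΩo : IsOpen Ω) (hΩc : Convex ℝ Ω)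
    (hΩS : {X : Matrix (Fin n) (Fin p) ℝ | Xᵀ * X = 1} ⊆ Ω)
    (hf : ContDiffOn ℝ 2 f Ω)
    (hρ : ∀ X ∈ Ω, ‖iteratedFDeriv ℝ 2 f X‖ ≤ ρ)
    (hM : ∀ X : Matrix (Fin n) (Fin p) ℝ, Xᵀ * X = 1 →
      ∀ v : Fin p → ℝ, Real.sqrt (∑ i, ((grad f X) *ᵥ v) i ^ 2) ≤
        M * Real.sqrt (∑ j, v j ^ 2))
    (hγ : ρ < γ)
    (Xb Xp : Matrix (Fin n) (Fin p) ℝ) (hXb : Xbᵀ * Xb = 1)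
    (U S V : Matrix (Fin p) (Fin p) ℝ) (hU : Uᵀ * U = 1) (hV : Vᵀ * V = 1)
    (hSd : ∀ i j, i ≠ j → S i j = 0) (hS0 : ∀ i, 0 ≤ S i i)
    (hZ : Xbᵀ * grad f Xb - γ • 1 = U * S * Vᵀ)
    (hXp1 : Xbᵀ * grad f Xb - γ • 1 = 0 → Xp = Xb)
    (hXp2 : Xbᵀ * grad f Xb - γ • 1 ≠ 0 → Xp = Xb * (-(U * Vᵀ))) :
    (1 / (8 * (M + γ))) * frobSq (Xbᵀ * grad f Xb - (grad f Xb)ᵀ * Xb) ≤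
      f Xb - f Xp := by
  classical
  set G := grad f Xb with hG
  set Z := Xbᵀ * G - γ • (1 : Matrix (Fin p) (Fin p) ℝ) with hZdef
  have hskew : Xbᵀ * G - Gᵀ * Xb = Z - Zᵀ := by
    rw [hZdef, Matrix.transpose_sub, Matrix.transpose_smul, Matrix.transpose_one,
      Matrix.transpose_mul, Matrix.transpose_transpose]
    abel
  have hρ0 : (0:ℝ) ≤ ρ := le_trans (norm_nonneg _) (hρ Xb (hΩS hXb))
  have hγ0 : (0:ℝ) ≤ γ := le_of_lt (lt_of_le_of_lt hρ0 hγ)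
  by_cases hz0 : Z = 0
  · rw [hXp1 hz0, hskew, hz0]
    simp [frobSq]
  · have hXpQ : Xp = Xb * (-(U * Vᵀ)) := hXp2 hz0
    set Q : Matrix (Fin p) (Fin p) ℝ := -(U * Vᵀ) with hQdef
    have hVVt : V * Vᵀ = 1 := mul_eq_one_comm.mp hV
    have hSdiag : S = Matrix.diagonal (fun j => S j j) := by
      ext i j
      by_cases h : i = j
      · subst h; simp
      · rw [hSd i j h, Matrix.diagonal_apply_ne _ h]
    have hSsymm : Sᵀ = S := by rw [hSdiag]; exact Matrix.diagonal_transpose _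
    have hUcol : ∀ j, ∑ i, U i j ^ 2 = 1 := by
      intro j
      have h := congrFun (congrFun hU j) j
      simpa [Matrix.mul_apply, Matrix.transpose_apply, pow_two] using h
    have hVcol : ∀ j, ∑ i, V i j ^ 2 = 1 := by
      intro j
      have h := congrFun (congrFun hV j) j
      simpa [Matrix.mul_apply, Matrix.transpose_apply, pow_two] using h
    have h1w : ∀ j, 0 ≤ 1 + ∑ i, U i j * V i j := by
      intro j
      have h := Finset.sum_mul_sq_le_sq_mul_sq Finset.univ (fun i => U i j) (fun i => V i j)
      rw [hUcol j, hVcol j] at h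
      nlinarith
    have hp : 0 < p := by
      rcases Nat.eq_zero_or_pos p with h | h
      · exfalso; apply hz0; ext i j; exact absurd i.isLt (by omega)
      · exact h
    have hM0 : (0:ℝ) ≤ M := by
      have j0 : Fin p := ⟨0, hp⟩
      have h := hM Xb hXb (fun k => if k = j0 then 1 else 0)
      have hv : ∑ k, (if k = j0 then (1:ℝ) else 0) ^ 2 = 1 := by simp
      rw [hv, Real.sqrt_one, mul_one] at h
      exact le_trans (Real.sqrt_nonneg _) h
    have hMγ : (0:ℝ) < M + γ := by
      have hγpos : (0:ℝ) < γ := lt_of_le_of_lt hρ0 hγ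
      linarith
    have hQtQ : Qᵀ * Q = 1 := by
      rw [hQdef, Matrix.transpose_neg, Matrix.transpose_mul, Matrix.transpose_transpose,
        neg_mul, mul_neg, neg_neg]
      calc V * Uᵀ * (U * Vᵀ) = V * ((Uᵀ * U) * Vᵀ) := by simp only [Matrix.mul_assoc]
        _ = 1 := by rw [hU, Matrix.one_mul, hVVt]
    have hXpS : Xpᵀ * Xp = 1 := by
      rw [hXpQ]
      calc (Xb * Q)ᵀ * (Xb * Q) = Qᵀ * ((Xbᵀ * Xb) * Q) := by
            rw [Matrix.transpose_mul]; simp only [Matrix.mul_assoc]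
        _ = 1 := by rw [hXb, Matrix.one_mul, hQtQ]
    have hdXb : Xp - Xb = Xb * (Q - 1) := by
      rw [hXpQ, Matrix.mul_sub, Matrix.mul_one]
    -- descent lemma application
    have hdiff : ∀ z ∈ Ω, HasFDerivAt f (fderiv ℝ f z) z := fun z hz =>
      ((hf.differentiableOn (by norm_num)).differentiableAt (hΩo.mem_nhds hz)).hasFDerivAt
    letI : NormedAddCommGroup (Matrix (Fin n) (Fin p) ℝ →L[ℝ] ℝ) := ContinuousLinearMap.toNormedAddCommGroup
    letI : NormedSpace ℝ (Matrix (Fin n) (Fin p) ℝ →L[ℝ] ℝ) := ContinuousLinearMap.toNormedSpace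
    letI : NormedAddCommGroup (Matrix (Fin n) (Fin p) ℝ →L[ℝ] Matrix (Fin n) (Fin p) ℝ →L[ℝ] ℝ) :=
      ContinuousLinearMap.toNormedAddCommGroup
    have hf' : ContDiffOn ℝ 1 (fderiv ℝ f) Ω := hf.fderiv_of_isOpen hΩo (by norm_num)
    have hf'diff : ∀ z ∈ Ω, DifferentiableAt ℝ (fderiv ℝ f) z := fun z hz =>
      (hf'.differentiableOn (by norm_num)).differentiableAt (hΩo.mem_nhds hz)
    have hbound : ∀ z ∈ Ω, ‖fderiv ℝ (fderiv ℝ f) z‖ ≤ ρ := by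
      intro z hz
      apply ContinuousLinearMap.opNorm_le_bound _ hρ0
      intro m
      apply ContinuousLinearMap.opNorm_le_bound _ (mul_nonneg hρ0 (norm_nonneg m))
      intro k
      have h : fderiv ℝ (fderiv ℝ f) z m k = iteratedFDeriv ℝ 2 f z ![m, k] := by
        rw [iteratedFDeriv_two_apply]; simp; rfl
      have h2 : ‖iteratedFDeriv ℝ 2 f z ![m, k]‖ ≤ ‖iteratedFDeriv ℝ 2 f z‖ * (‖m‖ * ‖k‖) := by
        have h3 := (iteratedFDeriv ℝ 2 f z).le_opNorm ![m, k]
        simpa [Fin.prod_univ_two] using h3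
      calc ‖fderiv ℝ (fderiv ℝ f) z m k‖ = ‖iteratedFDeriv ℝ 2 f z ![m, k]‖ := by rw [h]
        _ ≤ ‖iteratedFDeriv ℝ 2 f z‖ * (‖m‖ * ‖k‖) := h2
        _ ≤ ρ * (‖m‖ * ‖k‖) := mul_le_mul_of_nonneg_right (hρ z hz) (by positivity)
        _ = ρ * ‖m‖ * ‖k‖ := by ring
    have hlip : ∀ z ∈ Ω, ∀ w ∈ Ω, ‖fderiv ℝ f w - fderiv ℝ f z‖ ≤ ρ * ‖w - z‖ := fun z hz w hw =>
      Convex.norm_image_sub_le_of_norm_fderiv_le hf'diff hbound hΩc hz hw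
    have hdesc := descent_lemma hΩc hρ0 hdiff hlip (hΩS hXb) (hΩS hXpS)
    -- trace computations
    have happly : fderiv ℝ f Xb (Xp - Xb) = Matrix.trace ((Xp - Xb)ᵀ * G) := by
      rw [clm_apply_matrix (fderiv ℝ f Xb) (Xp - Xb)]
      simp only [Matrix.trace, Matrix.diag_apply, Matrix.mul_apply, Matrix.transpose_apply]
      rw [Finset.sum_comm]
      refine Finset.sum_congr rfl fun i _ => Finset.sum_congr rfl fun j _ => ?_
      rw [hG]; rfl
    have hZG : Xbᵀ * G = Z + γ • (1 : Matrix (Fin p) (Fin p) ℝ) := by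
      rw [hZdef, sub_add_cancel]
    have e3 : Matrix.trace (Qᵀ * Z) = -Matrix.trace S := by
      have key : V * Uᵀ * (U * S * Vᵀ) = V * (S * Vᵀ) := by
        calc V * Uᵀ * (U * S * Vᵀ) = V * ((Uᵀ * U) * (S * Vᵀ)) := by
              simp only [Matrix.mul_assoc]
          _ = V * (S * Vᵀ) := by rw [hU, Matrix.one_mul]
      have hQZ : Qᵀ * Z = -(V * (S * Vᵀ)) := by
        rw [hQdef, hZ, Matrix.transpose_neg, Matrix.transpose_mul, Matrix.transpose_transpose,
          neg_mul, key]
      rw [hQZ, Matrix.trace_neg, neg_inj, Matrix.trace_mul_comm, Matrix.mul_assoc, hV,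
        Matrix.mul_one]
    have e4 : Matrix.trace ((Xp - Xb)ᵀ * G)
        = -Matrix.trace S + γ * Matrix.trace Q - Matrix.trace Z - γ * p := by
      have e1 : (Xp - Xb)ᵀ * G = (Qᵀ - 1) * (Z + γ • (1 : Matrix (Fin p) (Fin p) ℝ)) := by
        rw [hdXb, Matrix.transpose_mul, Matrix.transpose_sub, Matrix.transpose_one,
          Matrix.mul_assoc, hZG]
      have e2 : (Qᵀ - 1) * (Z + γ • (1 : Matrix (Fin p) (Fin p) ℝ))
          = Qᵀ * Z + γ • Qᵀ - Z - γ • (1 : Matrix (Fin p) (Fin p) ℝ) := by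
        rw [sub_mul, one_mul, mul_add, mul_smul_comm, Matrix.mul_one]
        abel_nf
      rw [e1, e2, Matrix.trace_sub, Matrix.trace_sub, Matrix.trace_add, Matrix.trace_smul,
        Matrix.trace_smul, Matrix.trace_transpose, Matrix.trace_one, e3]
      simp only [smul_eq_mul, Fintype.card_fin]
    have e5 : frobSq (Xp - Xb) = 2 * p - 2 * Matrix.trace Q := by
      rw [frobSq_eq_trace]
      have e1 : (Xp - Xb)ᵀ * (Xp - Xb) = (Qᵀ - 1) * (Q - 1) := by
        rw [hdXb, Matrix.transpose_mul, Matrix.transpose_sub, Matrix.transpose_one]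
        calc (Qᵀ - 1) * Xbᵀ * (Xb * (Q - 1)) = (Qᵀ - 1) * ((Xbᵀ * Xb) * (Q - 1)) := by
              simp only [Matrix.mul_assoc]
          _ = (Qᵀ - 1) * (Q - 1) := by rw [hXb, Matrix.one_mul]
      have e2 : (Qᵀ - 1) * (Q - 1) = Qᵀ * Q - Qᵀ - Q + 1 := by
        rw [sub_mul, one_mul, mul_sub, Matrix.mul_one]
        abel_nf
      rw [e1, e2, Matrix.trace_add, Matrix.trace_sub, Matrix.trace_sub, hQtQ, Matrix.trace_one,
        Matrix.trace_transpose]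
      simp only [Fintype.card_fin]
      ring
    have e6 : 0 ≤ (p:ℝ) - Matrix.trace Q := by
      nlinarith [frobSq_nonneg (Xp - Xb), e5]
    have e7 : Matrix.trace S + Matrix.trace Z ≤ f Xb - f Xp := by
      have hn : ‖Xp - Xb‖ ^ 2 = frobSq (Xp - Xb) := norm_sq_eq_frobSq _
      erw [happly] at hdesc
      rw [e4, hn, e5] at hdesc
      have hprod : 0 ≤ (γ - ρ) * ((p:ℝ) - Matrix.trace Q) :=
        mul_nonneg (sub_nonneg.2 (le_of_lt hγ)) e6
      linarith [hdesc, hprod]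
    -- trace formulas as sums
    have hTS : Matrix.trace S = ∑ j, S j j := by simp [Matrix.trace, Matrix.diag]
    have hentryZ : ∀ i k, (U * S * Vᵀ) i k = ∑ j, U i j * S j j * V k j := by
      intro i k
      rw [Matrix.mul_apply]
      refine Finset.sum_congr rfl fun j _ => ?_
      rw [Matrix.transpose_apply]
      congr 1
      conv_lhs => rw [hSdiag]
      rw [Matrix.mul_diagonal]
    have hTZ : Matrix.trace Z = ∑ j, S j j * ∑ i, U i j * V i j := by
      rw [hZ]
      calc Matrix.trace (U * S * Vᵀ) = ∑ i, (U * S * Vᵀ) i i := by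
            simp [Matrix.trace, Matrix.diag]
        _ = ∑ i, ∑ j, U i j * S j j * V i j :=
            Finset.sum_congr rfl fun i _ => hentryZ i i
        _ = ∑ j, ∑ i, U i j * S j j * V i j := Finset.sum_comm
        _ = ∑ j, S j j * ∑ i, U i j * V i j := by
            refine Finset.sum_congr rfl fun j _ => ?_
            rw [Finset.mul_sum]
            exact Finset.sum_congr rfl fun i _ => by ring
    -- singular value bound
    have hσM : ∀ j, S j j ≤ M + γ := by
      intro j
      set v : Fin p → ℝ := fun i => V i j with hv
      have henv : en v = 1 := by
        rw [show en v = Real.sqrt (∑ i, V i j ^ 2) from rfl, hVcol j, Real.sqrt_one]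
      have henU : en (fun i => U i j) = 1 := by
        rw [show en (fun i => U i j) = Real.sqrt (∑ i, U i j ^ 2) from rfl, hUcol j,
          Real.sqrt_one]
      have hVtv : Vᵀ *ᵥ v = fun k => (1 : Matrix (Fin p) (Fin p) ℝ) k j := by
        funext k
        have h := congrFun (congrFun hV k) j
        simpa [Matrix.mulVec, dotProduct, Matrix.mul_apply, Matrix.transpose_apply]
          using h
      have hSv : (S *ᵥ fun k => (1 : Matrix (Fin p) (Fin p) ℝ) k j) = fun i => S i j := by
        funext i
        simp [Matrix.mulVec, dotProduct, Matrix.one_apply]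
      have hUv : (U *ᵥ fun i => S i j) = fun i => S j j * U i j := by
        funext i
        simp only [Matrix.mulVec, dotProduct]
        rw [Finset.sum_eq_single j]
        · ring
        · intro k _ hk; rw [hSd k j hk, mul_zero]
        · intro h; exact absurd (Finset.mem_univ j) h
      have hZv : Z *ᵥ v = fun i => S j j * U i j := by
        rw [hZ, ← Matrix.mulVec_mulVec, ← Matrix.mulVec_mulVec, hVtv, hSv, hUv]
      have hleft : en (Z *ᵥ v) = S j j := by
        rw [hZv, en_smul, henU, abs_of_nonneg (hS0 j), mul_one]
      have hZv2 : Z *ᵥ v = fun i => (Xbᵀ *ᵥ (G *ᵥ v)) i + (-γ) * v i := by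
        funext i
        rw [hZdef, Matrix.sub_mulVec, ← Matrix.mulVec_mulVec]
        simp only [Matrix.smul_mulVec, Matrix.one_mulVec, Pi.sub_apply, Pi.smul_apply,
          smul_eq_mul]
        ring
      have hright : en (Z *ᵥ v) ≤ M + γ := by
        rw [hZv2]
        calc en (fun i => (Xbᵀ *ᵥ (G *ᵥ v)) i + (-γ) * v i)
            ≤ en (Xbᵀ *ᵥ (G *ᵥ v)) + en (fun i => (-γ) * v i) := en_triangle _ _
          _ = en (Xbᵀ *ᵥ (G *ᵥ v)) + γ * en v := by rw [en_smul, abs_neg, abs_of_nonneg hγ0]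
          _ ≤ en (G *ᵥ v) + γ * en v :=
              add_le_add_left (en_transpose_mulVec_le Xb hXb (G *ᵥ v)) _
          _ ≤ M * en v + γ * en v := add_le_add_left (show en (G *ᵥ v) ≤ M * en v from hM Xb hXb v) _
          _ = M + γ := by rw [henv]; ring
      rw [← hleft]; exact hright
    -- final quadratic bound
    set B : Matrix (Fin p) (Fin p) ℝ := (U + V) * S * Vᵀ with hBdef
    have hBexp : B = Z + V * S * Vᵀ := by
      rw [hBdef, Matrix.add_mul, Matrix.add_mul, hZ]
    have hVSVt : (V * S * Vᵀ)ᵀ = V * S * Vᵀ := by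
      rw [Matrix.transpose_mul, Matrix.transpose_mul, Matrix.transpose_transpose, hSsymm,
        Matrix.mul_assoc]
    have hBmB : B - Bᵀ = Z - Zᵀ := by
      rw [hBexp, Matrix.transpose_add, hVSVt]
      abel
    have hstep2 : frobSq (Z - Zᵀ) ≤ 4 * frobSq B := by
      rw [← hBmB]
      have h1 : frobSq (B - Bᵀ) ≤ 2 * frobSq B + 2 * frobSq Bᵀ := by
        unfold frobSq
        rw [Finset.mul_sum, Finset.mul_sum, ← Finset.sum_add_distrib]
        apply Finset.sum_le_sum
        intro i _
        rw [Finset.mul_sum, Finset.mul_sum, ← Finset.sum_add_distrib]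
        apply Finset.sum_le_sum
        intro j _
        simp only [Matrix.sub_apply]
        exact sq_sub_le_two _ _
      rw [frobSq_transpose] at h1
      linarith
    have hstep3 : frobSq B = frobSq ((U + V) * S) := by
      rw [frobSq_eq_trace, frobSq_eq_trace, hBdef]
      set C := (U + V) * S with hC
      rw [Matrix.transpose_mul, Matrix.transpose_transpose]
      calc Matrix.trace (V * Cᵀ * (C * Vᵀ)) = Matrix.trace ((C * Vᵀ) * (V * Cᵀ)) :=
            Matrix.trace_mul_comm _ _
        _ = Matrix.trace (C * ((Vᵀ * V) * Cᵀ)) := by simp only [Matrix.mul_assoc]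
        _ = Matrix.trace (C * Cᵀ) := by rw [hV, Matrix.one_mul]
        _ = Matrix.trace (Cᵀ * C) := Matrix.trace_mul_comm _ _
    have hstep4 : frobSq ((U + V) * S) = ∑ j, S j j ^ 2 * (2 + 2 * ∑ i, U i j * V i j) := by
      conv_lhs => rw [hSdiag]
      unfold frobSq
      simp only [Matrix.mul_diagonal, Matrix.add_apply]
      rw [Finset.sum_comm]
      refine Finset.sum_congr rfl fun j _ => ?_
      have hsum : ∑ i, ((U i j + V i j) * S j j) ^ 2
          = S j j ^ 2 * (2 + 2 * ∑ i, U i j * V i j) := by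
        have expand : ∑ i, ((U i j + V i j) * S j j) ^ 2
            = S j j ^ 2 * ∑ i, (U i j ^ 2 + V i j ^ 2 + 2 * (U i j * V i j)) := by
          rw [Finset.mul_sum]
          exact Finset.sum_congr rfl fun i _ => by ring
        rw [expand, Finset.sum_add_distrib, Finset.sum_add_distrib, hUcol j, hVcol j,
          ← Finset.mul_sum]
        ring
      exact hsum
    have e8 : frobSq (Z - Zᵀ) ≤ 8 * (M + γ) * (Matrix.trace S + Matrix.trace Z) := by
      have h1 : ∑ j, S j j ^ 2 * (2 + 2 * ∑ i, U i j * V i j)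
          ≤ (M + γ) * ∑ j, S j j * (2 + 2 * ∑ i, U i j * V i j) := by
        rw [Finset.mul_sum]
        apply Finset.sum_le_sum
        intro j _
        have ha := hσM j
        have hb := hS0 j
        have hc := h1w j
        have h4 : 0 ≤ S j j * (2 + 2 * ∑ i, U i j * V i j) :=
          mul_nonneg hb (by linarith)
        calc S j j ^ 2 * (2 + 2 * ∑ i, U i j * V i j)
            = S j j * (S j j * (2 + 2 * ∑ i, U i j * V i j)) := by ring
          _ ≤ (M + γ) * (S j j * (2 + 2 * ∑ i, U i j * V i j)) :=
              mul_le_mul_of_nonneg_right ha h4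
      have h2 : ∑ j, S j j * (2 + 2 * ∑ i, U i j * V i j)
          = 2 * (Matrix.trace S + Matrix.trace Z) := by
        rw [hTS, hTZ]
        calc ∑ j, S j j * (2 + 2 * ∑ i, U i j * V i j)
            = ∑ j, (2 * S j j + 2 * (S j j * ∑ i, U i j * V i j)) :=
              Finset.sum_congr rfl fun j _ => by ring
          _ = 2 * (∑ j, S j j) + 2 * ∑ j, S j j * ∑ i, U i j * V i j := by
              rw [Finset.sum_add_distrib, ← Finset.mul_sum, ← Finset.mul_sum]
          _ = 2 * ((∑ j, S j j) + ∑ j, S j j * ∑ i, U i j * V i j) := by ring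
      calc frobSq (Z - Zᵀ) ≤ 4 * frobSq B := hstep2
        _ = 4 * ∑ j, S j j ^ 2 * (2 + 2 * ∑ i, U i j * V i j) := by rw [hstep3, hstep4]
        _ ≤ 4 * ((M + γ) * ∑ j, S j j * (2 + 2 * ∑ i, U i j * V i j)) :=
            mul_le_mul_of_nonneg_left h1 (by norm_num)
        _ = 8 * (M + γ) * (Matrix.trace S + Matrix.trace Z) := by rw [h2]; ring
    rw [hskew]
    have h8 : (0:ℝ) < 8 * (M + γ) := by linarith
    rw [one_div, inv_mul_le_iff₀ h8]
    calc frobSq (Z - Zᵀ) ≤ 8 * (M + γ) * (Matrix.trace S + Matrix.trace Z) := e8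
      _ ≤ 8 * (M + γ) * (f Xb - f Xp) := mul_le_mul_of_nonneg_left e7 (by linarith)
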